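/- Consider the upper bound from Choi and Hobert for the logistic regression Gibbs sampler: $\tilde r = 1 - \delta$ with $\delta = \lambda^{p/2}(\det A)^{-1/2}\, 2^{-n}\exp\left(-\frac{n}{4} - \frac{1}{4\lambda}\|X A^{-1/2} X^T \tilde Y\|_2^2\right)$ where $A = \frac12 X^T X + \lambda I_p$. Since $\det A \ge \lambda^p$, we have $\delta \le 2^{-n} e^{-n/4}$, and hence for fixed $p$ the bound $\tilde r \to 1$ exponentially fast as $n \to \infty$; moreover the number of iterations $K_{n,\epsilon} = \log(\epsilon/M)/\log(1-\delta)$ needed to reach tolerance $\epsilon$ satisfies $K_{n,\epsilon} \ge (2e^{1/4})^n \log(M/\epsilon)$ for large $n$ (using $1/\log(1/(1-\delta)) \ge$ asymptotically $1/\delta$ behavior). -/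

import Mathlib

open Matrix Filter

lemma aux_det_ge {p : ℕ} {l : ℝ} (hl : 0 < l) (A : Matrix (Fin p) (Fin p) ℝ)
    (hH : A.IsHermitian) (hB : (A - l • 1).PosSemidef) : l ^ p ≤ A.det := by
  rw [hH.det_eq_prod_eigenvalues]
  calc l ^ p = ∏ _i : Fin p, l := by simp
    _ ≤ ∏ i, hH.eigenvalues i := by
        refine Finset.prod_le_prod (fun _ _ => hl.le) (fun i _ => ?_)
        set v : Fin p → ℝ := ⇑(hH.eigenvectorBasis i) with hv
        have hav : A *ᵥ v = hH.eigenvalues i • v := hH.mulVec_eigenvectorBasis i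
        have hvv : dotProduct v v = 1 := by
          have hn : ‖hH.eigenvectorBasis i‖ = 1 := hH.eigenvectorBasis.orthonormal.1 i
          have h2 : dotProduct v v = ‖hH.eigenvectorBasis i‖ ^ 2 := by
            rw [EuclideanSpace.norm_eq, Real.sq_sqrt (by positivity)]
            simp [dotProduct, Real.norm_eq_abs, sq_abs, pow_two]
            rfl
          rw [h2, hn, one_pow]
        have h0 := hB.dotProduct_mulVec_nonneg v
        have hsub : (A - l • 1) *ᵥ v = (hH.eigenvalues i - l) • v := by
          rw [sub_mulVec, hav, smul_mulVec, one_mulVec, sub_smul]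
        rw [hsub, star_trivial, dotProduct_smul, smul_eq_mul, hvv, mul_one, sub_nonneg] at h0
        exact h0

theorem choi_hobert_bound_degenerates
    (p : ℕ) (l : ℝ) (hl : 0 < l) (M ε : ℝ) (hε : 0 < ε) (hεM : ε < M)
    (X : (n : ℕ) → Matrix (Fin n) (Fin p) ℝ)
    (Yt : (n : ℕ) → Fin n → ℝ)
    (S : (n : ℕ) → Matrix (Fin p) (Fin p) ℝ)
    (A : (n : ℕ) → Matrix (Fin p) (Fin p) ℝ)
    (hA : ∀ n, A n = (1 / 2 : ℝ) • ((X n)ᵀ * X n) + l • (1 : Matrix (Fin p) (Fin p) ℝ))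
    (hS : ∀ n, S n * S n = (A n)⁻¹ ∧ (S n)ᵀ = S n)
    (δ : ℕ → ℝ)
    (hδ : ∀ n, δ n = l ^ ((p : ℝ) / 2) * ((A n).det) ^ (-(1 / 2) : ℝ) *
      (2 : ℝ) ^ (-(n : ℝ)) *
      Real.exp (-(n : ℝ) / 4 -
        (1 / (4 * l)) * ∑ i, ((X n) *ᵥ (S n *ᵥ ((X n)ᵀ *ᵥ Yt n))) i ^ 2)) :
    (∀ n, l ^ p ≤ (A n).det) ∧
    (∀ n, δ n ≤ (2 : ℝ) ^ (-(n : ℝ)) * Real.exp (-(n : ℝ) / 4)) ∧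
    Tendsto (fun n => 1 - δ n) atTop (nhds 1) ∧
    (∀ c : ℝ, 0 < c → c < 1 → ∃ N : ℕ, ∀ n ≥ N,
      c * (2 * Real.exp (1 / 4)) ^ n * Real.log (M / ε)
        ≤ Real.log (ε / M) / Real.log (1 - δ n)) := by
  -- determinant bound
  have key : ∀ n, l ^ p ≤ (A n).det := by
    intro n
    have hPS : ((X n)ᵀ * X n).PosSemidef := by
      rw [← conjTranspose_eq_transpose_of_trivial]
      exact posSemidef_conjTranspose_mul_self _
    have h2 : ((1 / 2 : ℝ) • ((X n)ᵀ * X n)).IsHermitian := by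
      show _ᴴ = _
      rw [conjTranspose_smul, hPS.1.eq, star_trivial]
    have hH : (A n).IsHermitian := by
      rw [hA n]
      refine h2.add ?_
      show _ᴴ = _
      rw [conjTranspose_smul, conjTranspose_one, star_trivial]
    have hB : (A n - l • 1).PosSemidef := by
      rw [hA n, add_sub_cancel_right]
      refine .of_dotProduct_mulVec_nonneg h2 (fun x => ?_)
      rw [smul_mulVec, dotProduct_smul, smul_eq_mul]
      exact mul_nonneg (by norm_num) (hPS.dotProduct_mulVec_nonneg x)
    exact aux_det_ge hl _ hH hB
  have detpos : ∀ n, 0 < (A n).det := fun n => lt_of_lt_of_le (pow_pos hl p) (key n)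
  -- δ bound
  have bound : ∀ n, δ n ≤ (2 : ℝ) ^ (-(n : ℝ)) * Real.exp (-(n : ℝ) / 4) := by
    intro n
    rw [hδ n]
    have h12 : l ^ ((p : ℝ) / 2) * ((A n).det) ^ (-(1 / 2) : ℝ) ≤ 1 := by
      have hd : ((A n).det) ^ (-(1 / 2) : ℝ) ≤ ((l ^ p : ℝ)) ^ (-(1 / 2) : ℝ) :=
        Real.rpow_le_rpow_of_nonpos (pow_pos hl p) (key n) (by norm_num)
      have hlp : ((l ^ p : ℝ)) ^ (-(1 / 2) : ℝ) = l ^ (-((p : ℝ) / 2)) := by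
        rw [← Real.rpow_natCast l p, ← Real.rpow_mul hl.le]
        ring_nf
      calc l ^ ((p : ℝ) / 2) * ((A n).det) ^ (-(1 / 2) : ℝ)
          ≤ l ^ ((p : ℝ) / 2) * l ^ (-((p : ℝ) / 2)) := by
            rw [← hlp]
            exact mul_le_mul_of_nonneg_left hd (Real.rpow_nonneg hl.le _)
        _ = 1 := by rw [← Real.rpow_add hl]; norm_num
    have hexp : Real.exp (-(n : ℝ) / 4 -
        (1 / (4 * l)) * ∑ i, ((X n) *ᵥ (S n *ᵥ ((X n)ᵀ *ᵥ Yt n))) i ^ 2)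
        ≤ Real.exp (-(n : ℝ) / 4) := by
      apply Real.exp_le_exp.2
      have hsum : (0 : ℝ) ≤ ∑ i, ((X n) *ᵥ (S n *ᵥ ((X n)ᵀ *ᵥ Yt n))) i ^ 2 :=
        Finset.sum_nonneg fun i _ => sq_nonneg _
      have : (0 : ℝ) ≤ (1 / (4 * l)) * ∑ i, ((X n) *ᵥ (S n *ᵥ ((X n)ᵀ *ᵥ Yt n))) i ^ 2 :=
        mul_nonneg (by positivity) hsum
      linarith
    have h3 : l ^ ((p : ℝ) / 2) * ((A n).det) ^ (-(1 / 2) : ℝ) * (2 : ℝ) ^ (-(n : ℝ))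
        ≤ (2 : ℝ) ^ (-(n : ℝ)) := by
      have := mul_le_mul_of_nonneg_right h12
        (le_of_lt (Real.rpow_pos_of_pos two_pos (-(n : ℝ))))
      simpa using this
    exact mul_le_mul h3 hexp (Real.exp_pos _).le (Real.rpow_pos_of_pos two_pos _).le
  have δpos : ∀ n, 0 < δ n := by
    intro n
    rw [hδ n]
    exact mul_pos (mul_pos (mul_pos (Real.rpow_pos_of_pos hl _)
      (Real.rpow_pos_of_pos (detpos n) _)) (Real.rpow_pos_of_pos two_pos _)) (Real.exp_pos _)
  -- geometric form
  set r : ℝ := Real.exp (-(1 / 4 : ℝ)) / 2 with hr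
  have h14 : (1 : ℝ) ≤ Real.exp (1 / 4) := Real.one_le_exp (by norm_num)
  have hrnn : 0 ≤ r := by positivity
  have hrlt : r < 1 := by
    have : Real.exp (-(1 / 4 : ℝ)) ≤ 1 := by
      rw [Real.exp_neg]
      exact inv_le_one_of_one_le₀ h14
    rw [hr]; linarith
  have hpow : ∀ n : ℕ, (2 : ℝ) ^ (-(n : ℝ)) * Real.exp (-(n : ℝ) / 4) = r ^ n := by
    intro n
    have e1 : (2 : ℝ) ^ (-(n : ℝ)) = ((2 : ℝ) ^ n)⁻¹ := by
      rw [Real.rpow_neg (by norm_num), Real.rpow_natCast]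
    have e2 : Real.exp (-(n : ℝ) / 4) = (Real.exp (-(1 / 4 : ℝ))) ^ n := by
      rw [← Real.exp_nat_mul]
      congr 1
      ring
    rw [e1, e2, hr, div_pow]
    ring
  have hδ0 : Tendsto δ atTop (nhds 0) := by
    apply squeeze_zero (fun n => (δpos n).le) (fun n => (bound n).trans_eq (hpow n))
    exact tendsto_pow_atTop_nhds_zero_of_lt_one hrnn hrlt
  refine ⟨key, bound, by simpa using tendsto_const_nhds.sub hδ0, ?_⟩
  -- iteration count
  intro c hc hc1
  set b : ℝ := 2 * Real.exp (1 / 4) with hbdef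
  have hbr : b * r = 1 := by
    have : Real.exp (1 / 4) * Real.exp (-(1 / 4 : ℝ)) = 1 := by
      rw [← Real.exp_add]; norm_num
    rw [hbdef, hr]; nlinarith [this]
  have hb0 : 0 < b := by positivity
  clear_value r b
  have hL : 0 < Real.log (M / ε) := Real.log_pos ((one_lt_div hε).2 hεM)
  have hlogEM : Real.log (ε / M) = -Real.log (M / ε) := by
    rw [← Real.log_inv, inv_div]
  have hev : ∀ᶠ n in atTop, r ^ n < 1 - c := by
    have := tendsto_pow_atTop_nhds_zero_of_lt_one hrnn hrlt
    exact this.eventually_lt_const (by linarith)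
  obtain ⟨N, hN⟩ := eventually_atTop.1 hev
  refine ⟨N, fun n hn => ?_⟩
  have hd0 : 0 < δ n := δpos n
  have hdr : δ n ≤ r ^ n := (bound n).trans_eq (hpow n)
  have hdc : δ n ≤ 1 - c := hdr.trans (hN n hn).le
  have h1d : 0 < 1 - δ n := by linarith
  have hg : Real.log (1 - δ n) < 0 := Real.log_neg h1d (by linarith)
  have hlog' : -Real.log (1 - δ n) ≤ δ n / (1 - δ n) := by
    have h := Real.log_le_sub_one_of_pos (inv_pos.2 h1d)
    rw [Real.log_inv] at h
    have : (1 - δ n)⁻¹ - 1 = δ n / (1 - δ n) := by field_simp; ring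
    linarith [this ▸ h]
  have hkey : c * b ^ n * (-Real.log (1 - δ n)) ≤ 1 := by
    calc c * b ^ n * (-Real.log (1 - δ n))
        ≤ c * b ^ n * (δ n / (1 - δ n)) :=
          mul_le_mul_of_nonneg_left hlog' (by positivity)
      _ ≤ c * b ^ n * (r ^ n / (1 - δ n)) :=
          mul_le_mul_of_nonneg_left (by gcongr) (by positivity)
      _ = c * (b * r) ^ n / (1 - δ n) := by rw [mul_pow]; ring
      _ = c / (1 - δ n) := by rw [hbr, one_pow, mul_one]
      _ ≤ 1 := (div_le_one h1d).2 (by linarith)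
  rw [hlogEM]
  have hswap : -Real.log (M / ε) / Real.log (1 - δ n)
      = Real.log (M / ε) / (-Real.log (1 - δ n)) := by
    rw [div_neg, neg_div]
  rw [hswap, le_div_iff₀ (by linarith : 0 < -Real.log (1 - δ n))]
  calc c * b ^ n * Real.log (M / ε) * (-Real.log (1 - δ n))
      = (c * b ^ n * (-Real.log (1 - δ n))) * Real.log (M / ε) := by ring
    _ ≤ 1 * Real.log (M / ε) := mul_le_mul_of_nonneg_right hkey hL.le
    _ = Real.log (M / ε) := one_mul _
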